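/- Assume in addition that ∏_{i=1}^ℓ α_i = ∏_{i=1}^ℓ β_i. Then Φ(z) converges, as z → 0 (with z ≠ 0, z ≠ 1), to a 2×2 complex matrix M whose lower-left entry is 0 and whose two diagonal entries both equal (−1)^ℓ. -/

import Mathlib

open Matrix Filter Complex

/-- The odd transition matrix `φ_{2i-1}(z) = [[1, α⁻¹z⁻¹],[α, 1]]`. -/
noncomputable def phiOdd (a z : ℂ) : Matrix (Fin 2) (Fin 2) ℂ :=
  !![1, a⁻¹ * z⁻¹; a, 1]

/-- The even transition matrix `φ_{2i}(z) = (1 - z⁻¹)⁻¹ • [[1, β⁻¹z⁻¹],[β, 1]]`. -/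
noncomputable def phiEven (b z : ℂ) : Matrix (Fin 2) (Fin 2) ℂ :=
  (1 - z⁻¹)⁻¹ • !![1, b⁻¹ * z⁻¹; b, 1]

/-- The ordered product `Φ(z) = φ₁(z) φ₂(z) ⋯ φ_{2ℓ}(z)`, with the weights
`α_i, β_i` (for `i = 1, …, ℓ`) of the (2×ℓ)-periodic Aztec diamond. -/
noncomputable def Phi (ℓ : ℕ) (α β : ℕ → ℝ) (z : ℂ) : Matrix (Fin 2) (Fin 2) ℂ :=
  ((List.range ℓ).map (fun i => phiOdd (α (i + 1)) z * phiEven (β (i + 1)) z)).prod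

/-- The limit of a single pair `φ_odd · φ_even` as `z → 0`. -/
noncomputable def Mlim (a b : ℂ) : Matrix (Fin 2) (Fin 2) ℂ :=
  !![-(a⁻¹ * b), -(b⁻¹ + a⁻¹); 0, -(a * b⁻¹)]

/-- Auxiliary continuous-at-0 form of the pair product. -/
noncomputable def Gaux (a b z : ℂ) : Matrix (Fin 2) (Fin 2) ℂ :=
  (z - 1)⁻¹ • !![z + a⁻¹ * b, b⁻¹ + a⁻¹; (a + b) * z, z + a * b⁻¹]

lemma pair_eq (a b z : ℂ) (ha : a ≠ 0) (hb : b ≠ 0) (hz : z ≠ 0) (hz1 : z ≠ 1) :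
    phiOdd a z * phiEven b z = Gaux a b z := by
  have hz1' : z - 1 ≠ 0 := sub_ne_zero.mpr hz1
  have h1e : (1 : ℂ) - z⁻¹ = (z - 1) * z⁻¹ := by field_simp
  have h1 : (1 : ℂ) - z⁻¹ ≠ 0 := h1e ▸ mul_ne_zero hz1' (inv_ne_zero hz)
  unfold phiOdd phiEven Gaux
  ext i j
  fin_cases i <;> fin_cases j <;>
    simp only [Matrix.mul_apply, Fin.sum_univ_two, Matrix.smul_apply, Matrix.cons_val',
      Matrix.cons_val_zero, Matrix.cons_val_one, Matrix.head_cons, Matrix.head_fin_const,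
      Matrix.empty_val', Matrix.cons_val_fin_one, smul_eq_mul, h1e, Fin.zero_eta, Fin.mk_one,
      Matrix.of_apply] <;>
    field_simp <;> ring

lemma pair_tendsto (a b : ℂ) (ha : a ≠ 0) (hb : b ≠ 0) :
    Tendsto (fun z => phiOdd a z * phiEven b z)
      (nhdsWithin 0 {z : ℂ | z ≠ 0 ∧ z ≠ 1}) (nhds (Mlim a b)) := by
  have hG : ContinuousAt (Gaux a b) 0 := by
    apply ContinuousAt.smul (f := fun z : ℂ => (z - 1)⁻¹)
      (g := fun z : ℂ => !![z + a⁻¹ * b, b⁻¹ + a⁻¹; (a + b) * z, z + a * b⁻¹])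
    · exact ((continuous_id.sub continuous_const).continuousAt).inv₀
        (by norm_num)
    · exact (continuous_matrix fun i j => by
        fin_cases i <;> fin_cases j <;> simp <;> fun_prop).continuousAt
  have hG0 : Gaux a b 0 = Mlim a b := by
    unfold Gaux Mlim
    ext i j
    fin_cases i <;> fin_cases j <;> simp <;> norm_num
  have := hG.tendsto.mono_left (nhdsWithin_le_nhds
    (s := {z : ℂ | z ≠ 0 ∧ z ≠ 1}))
  rw [hG0] at this
  refine this.congr' ?_
  filter_upwards [self_mem_nhdsWithin] with z hz
  exact (pair_eq a b z ha hb hz.1 hz.2).symm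

lemma list_prod_tendsto {ι : Type*} (F : Filter ℂ) (l : List ι)
    (f : ι → ℂ → Matrix (Fin 2) (Fin 2) ℂ) (L : ι → Matrix (Fin 2) (Fin 2) ℂ)
    (h : ∀ i ∈ l, Tendsto (f i) F (nhds (L i))) :
    Tendsto (fun z => (l.map (fun i => f i z)).prod) F (nhds ((l.map L).prod)) := by
  induction l with
  | nil => simpa using tendsto_const_nhds
  | cons i l ih =>
    simp only [List.map_cons, List.prod_cons]
    exact (h i List.mem_cons_self).mul
      (ih fun j hj => h j (List.mem_cons_of_mem i hj))

lemma tri_prod (l : List (Matrix (Fin 2) (Fin 2) ℂ)) (h : ∀ A ∈ l, A 1 0 = 0) :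
    l.prod 1 0 = 0 ∧ l.prod 0 0 = (l.map (fun A => A 0 0)).prod ∧
    l.prod 1 1 = (l.map (fun A => A 1 1)).prod := by
  induction l with
  | nil => simp
  | cons A l ih =>
    obtain ⟨h10, h00, h11⟩ := ih fun B hB => h B (List.mem_cons_of_mem A hB)
    have hA : A 1 0 = 0 := h A List.mem_cons_self
    refine ⟨?_, ?_, ?_⟩ <;>
      simp [Matrix.mul_apply, Fin.sum_univ_two, hA, h10, h00, h11]

lemma list_range_prod (f : ℕ → ℂ) (n : ℕ) :
    ((List.range n).map f).prod = ∏ i ∈ Finset.range n, f i := by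
  induction n with
  | zero => simp
  | succ n ih =>
    rw [List.range_succ, List.map_append, List.prod_append, Finset.prod_range_succ, ih]
    simp

theorem stmt2 (ℓ : ℕ) (hℓ : 1 ≤ ℓ) (α β : ℕ → ℝ)
    (hα : ∀ i, 0 < α i) (hβ : ∀ i, 0 < β i)
    (hprod : ∏ i ∈ Finset.range ℓ, α (i + 1) = ∏ i ∈ Finset.range ℓ, β (i + 1)) :
    ∃ M : Matrix (Fin 2) (Fin 2) ℂ,
      Tendsto (Phi ℓ α β) (nhdsWithin 0 {z : ℂ | z ≠ 0 ∧ z ≠ 1}) (nhds M) ∧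
      M 1 0 = 0 ∧ M 0 0 = (-1 : ℂ) ^ ℓ ∧ M 1 1 = (-1 : ℂ) ^ ℓ := by
  have haz : ∀ i : ℕ, ((α (i + 1) : ℝ) : ℂ) ≠ 0 := fun i => by
    simp [Complex.ofReal_ne_zero, (hα (i + 1)).ne']
  have hbz : ∀ i : ℕ, ((β (i + 1) : ℝ) : ℂ) ≠ 0 := fun i => by
    simp [Complex.ofReal_ne_zero, (hβ (i + 1)).ne']
  set a : ℕ → ℂ := fun i => ((α (i + 1) : ℝ) : ℂ)
  set b : ℕ → ℂ := fun i => ((β (i + 1) : ℝ) : ℂ)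
  refine ⟨((List.range ℓ).map (fun i => Mlim (a i) (b i))).prod, ?_, ?_, ?_, ?_⟩
  · unfold Phi
    exact list_prod_tendsto _ (List.range ℓ)
      (fun i z => phiOdd (a i) z * phiEven (b i) z) _
      (fun i _ => pair_tendsto (a i) (b i) (haz i) (hbz i))
  all_goals {
    have hlow : ∀ A ∈ (List.range ℓ).map (fun i => Mlim (a i) (b i)), A 1 0 = 0 := by
      intro A hA
      obtain ⟨i, _, rfl⟩ := List.mem_map.mp hA
      simp [Mlim]
    obtain ⟨h10, h00, h11⟩ := tri_prod _ hlow
    have hprodC : ∏ i ∈ Finset.range ℓ, a i = ∏ i ∈ Finset.range ℓ, b i := by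
      have := congrArg (fun x : ℝ => (x : ℂ)) hprod
      push_cast at this
      simpa using this
    have hpb : ∏ i ∈ Finset.range ℓ, b i ≠ 0 := Finset.prod_ne_zero_iff.mpr fun i _ => hbz i
    first
    | exact h10
    | ( rw [h00, List.map_map, show ((fun A : Matrix (Fin 2) (Fin 2) ℂ => A 0 0) ∘
          fun i => Mlim (a i) (b i)) = fun i => -((a i)⁻¹ * b i) from rfl,
          list_range_prod]
        calc ∏ i ∈ Finset.range ℓ, -((a i)⁻¹ * b i)
            = ∏ i ∈ Finset.range ℓ, (-1 : ℂ) * ((a i)⁻¹ * b i) := by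
              simp [neg_one_mul]
          _ = (-1 : ℂ) ^ ℓ * ((∏ i ∈ Finset.range ℓ, a i)⁻¹ * ∏ i ∈ Finset.range ℓ, b i) := by
              rw [Finset.prod_mul_distrib, Finset.prod_const, Finset.card_range,
                Finset.prod_mul_distrib, Finset.prod_inv_distrib]
          _ = (-1 : ℂ) ^ ℓ := by rw [hprodC, inv_mul_cancel₀ hpb, mul_one] )
    | ( rw [h11, List.map_map, show ((fun A : Matrix (Fin 2) (Fin 2) ℂ => A 1 1) ∘
          fun i => Mlim (a i) (b i)) = fun i => -(a i * (b i)⁻¹) from rfl,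
          list_range_prod]
        calc ∏ i ∈ Finset.range ℓ, -(a i * (b i)⁻¹)
            = ∏ i ∈ Finset.range ℓ, (-1 : ℂ) * (a i * (b i)⁻¹) := by
              simp [neg_one_mul]
          _ = (-1 : ℂ) ^ ℓ * ((∏ i ∈ Finset.range ℓ, a i) * (∏ i ∈ Finset.range ℓ, b i)⁻¹) := by
              rw [Finset.prod_mul_distrib, Finset.prod_const, Finset.card_range,
                Finset.prod_mul_distrib, Finset.prod_inv_distrib]
          _ = (-1 : ℂ) ^ ℓ := by rw [hprodC, mul_inv_cancel₀ hpb, mul_one] )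
  }
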